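/- Let U ∈ U(2d,ℂ) be a unitary matrix. Then the following are equivalent: (i) there exist W ∈ O(2d,ℝ) and Δ ∈ U(d,ℂ) such that U = W · diag(Δ, conj(Δ)), where conj(Δ) is the entrywise complex conjugate of Δ; (ii) there exist W ∈ O(2d,ℝ) and Δ₁, Δ₂ ∈ U(d,ℂ) such that Δ₁Δ₂ᵀ is a real matrix and U = W · diag(Δ₁, Δ₂); (iii) there exists Δ ∈ U(d,ℂ) such that UᵀU = diag(Δ, conj(Δ)). -/

import Mathlib

open Matrix

section Helpers
set_option linter.unusedSectionVars false
open Matrix Polynomial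

variable {n : Type*} [Fintype n] [DecidableEq n]

lemma conj_map_eq_star_transpose (A : Matrix n n ℂ) : A.map (starRingEnd ℂ) = star Aᵀ := by
  ext i j; simp [Matrix.conjTranspose_apply]

lemma transpose_map_conj_eq_star (A : Matrix n n ℂ) : Aᵀ.map (starRingEnd ℂ) = star A := by
  ext i j; simp [Matrix.conjTranspose_apply]

lemma transpose_mem_unitary {A : Matrix n n ℂ} (h : A ∈ Matrix.unitaryGroup n ℂ) :
    Aᵀ ∈ Matrix.unitaryGroup n ℂ := by
  have h2 : A * star A = 1 := Matrix.mem_unitaryGroup_iff.mp h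
  rw [Matrix.mem_unitaryGroup_iff']
  calc star Aᵀ * Aᵀ = (A.map (starRingEnd ℂ)) * Aᵀ := by rw [conj_map_eq_star_transpose]
    _ = ((A * Aᵀ.map (starRingEnd ℂ)).map (starRingEnd ℂ)) := by
        rw [Matrix.map_mul (f := (starRingEnd ℂ))]
        congr 1
        ext i j; simp
    _ = ((A * star A).map (starRingEnd ℂ)) := by rw [transpose_map_conj_eq_star]
    _ = 1 := by rw [h2]; ext i j; simp [Matrix.one_apply, apply_ite]

lemma conj_mem_unitary {A : Matrix n n ℂ} (h : A ∈ Matrix.unitaryGroup n ℂ) :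
    A.map (starRingEnd ℂ) ∈ Matrix.unitaryGroup n ℂ := by
  rw [conj_map_eq_star_transpose, Matrix.mem_unitaryGroup_iff']
  rw [star_star]
  exact Matrix.mem_unitaryGroup_iff.mp (transpose_mem_unitary h)

lemma exists_circle_det_ne (Δ : Matrix n n ℂ) :
    ∃ z : ℂ, ‖z‖ = 1 ∧ (1 + z • Δ).det ≠ 0 := by
  set p : Polynomial ℂ := (1 + (X : ℂ[X]) • Δ.map C).det with hp
  have heval : ∀ z : ℂ, p.eval z = (1 + z • Δ).det := by
    intro z
    have h2 := RingHom.map_det (evalRingHom z) (1 + (X : ℂ[X]) • Δ.map C)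
    rw [RingHom.mapMatrix_apply] at h2
    rw [show p.eval z = (evalRingHom z) p from rfl, hp, h2]
    congr 1
    ext i j
    by_cases hij : i = j
    · subst hij
      simp [Matrix.map_apply, Matrix.one_apply_eq, Matrix.add_apply, Matrix.smul_apply,
        smul_eq_mul]
      ring
    · simp [Matrix.map_apply, Matrix.one_apply_ne hij, Matrix.add_apply, Matrix.smul_apply,
        smul_eq_mul]
      ring
  have hpne : p ≠ 0 := by
    intro h
    have h0 := heval 0
    rw [h] at h0
    simp at h0
  obtain ⟨θ, hθ, hroot⟩ : ∃ θ ∈ Set.Icc (0:ℝ) Real.pi, ¬ p.IsRoot (Complex.exp (θ * Complex.I)) := by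
    by_contra hcon
    push_neg at hcon
    have hinj : Set.InjOn (fun θ : ℝ => Complex.exp (θ * Complex.I)) (Set.Icc 0 Real.pi) := by
      intro a ha b hb hab
      have hcos : Real.cos a = Real.cos b := by
        have := congrArg Complex.re hab
        simpa [Complex.exp_ofReal_mul_I_re] using this
      exact Real.injOn_cos ha hb hcos
    have hinf : ((fun θ : ℝ => Complex.exp (θ * Complex.I)) '' Set.Icc 0 Real.pi).Infinite :=
      Set.Infinite.image hinj (Set.Icc_infinite Real.pi_pos)
    have hsub : ((fun θ : ℝ => Complex.exp (θ * Complex.I)) '' Set.Icc 0 Real.pi) ⊆ {x | p.IsRoot x} := by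
      rintro _ ⟨θ, hθ, rfl⟩; exact hcon θ hθ
    exact hinf (Set.Finite.subset (Polynomial.finite_setOf_isRoot hpne) hsub)
  refine ⟨Complex.exp (θ * Complex.I), by simp [Complex.norm_exp_ofReal_mul_I], ?_⟩
  rw [← heval]
  exact hroot

lemma takagi (Δ : Matrix n n ℂ) (hΔ : Δ ∈ Matrix.unitaryGroup n ℂ) (hsymm : Δᵀ = Δ) :
    ∃ V : Matrix n n ℂ, V ∈ Matrix.unitaryGroup n ℂ ∧ Vᵀ * V = Δ := by
  obtain ⟨z, hz, hdet⟩ := exists_circle_det_ne Δ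
  set Δ' := z • Δ with hΔ'def
  have hzz : (starRingEnd ℂ) z * z = 1 := by
    rw [mul_comm, Complex.mul_conj]
    norm_cast
    rw [Complex.normSq_eq_norm_sq, hz, one_pow]
  have hΔ's : Δ'ᵀ = Δ' := by rw [hΔ'def, Matrix.transpose_smul, hsymm]
  have hΔu1 : star Δ * Δ = 1 := Matrix.mem_unitaryGroup_iff'.mp hΔ
  have hΔu2 : Δ * star Δ = 1 := Matrix.mem_unitaryGroup_iff.mp hΔ
  have hstarΔ' : star Δ' * Δ' = 1 := by
    rw [hΔ'def, star_smul, smul_mul_smul_comm, hΔu1, Complex.star_def, hzz, one_smul]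
  have hΔ'star : Δ' * star Δ' = 1 := by
    rw [hΔ'def, star_smul, smul_mul_smul_comm, hΔu2, Complex.star_def, mul_comm z _, hzz,
      one_smul]
  set M := 1 + Δ' with hMdef
  have hMdet : IsUnit M.det := isUnit_iff_ne_zero.mpr hdet
  set N := M⁻¹ with hNdef
  have hMN : M * N = 1 := Matrix.mul_nonsing_inv M hMdet
  have hNM : N * M = 1 := Matrix.nonsing_inv_mul M hMdet
  have hΔ'N : Δ' * N = 1 - N := by
    have h1 : N + Δ' * N = 1 := by rw [← one_mul N, ← mul_assoc, mul_one, ← add_mul, ← hMdef, hMN]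
    exact eq_sub_of_add_eq' h1
  have hNΔ' : N * Δ' = 1 - N := by
    have h1 : N + N * Δ' = 1 := by rw [← mul_one N, mul_assoc, one_mul, ← mul_add, ← hMdef, hNM]
    exact eq_sub_of_add_eq' h1
  have hMT : Mᵀ = M := by rw [hMdef, Matrix.transpose_add, Matrix.transpose_one, hΔ's]
  have hNT : Nᵀ = N := by rw [hNdef, Matrix.transpose_nonsing_inv, hMT]
  have hcomm : star Δ' * N = N * star Δ' := by
    have hc0 : star Δ' * Δ' = Δ' * star Δ' := by rw [hstarΔ', hΔ'star]
    have hMc : M * star Δ' = star Δ' * M := by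
      rw [hMdef, add_mul, mul_add, one_mul, mul_one, hc0]
    calc star Δ' * N = (N * M) * (star Δ' * N) := by rw [hNM, one_mul]
      _ = N * ((M * star Δ') * N) := by rw [mul_assoc, mul_assoc]
      _ = N * (star Δ' * (M * N)) := by rw [hMc, mul_assoc]
      _ = N * star Δ' := by rw [hMN, mul_one]
  have hstarN : star N = Δ' * N := by
    have h1 : star N * star M = 1 := by simpa using congrArg star hMN
    have h2 : (Δ' * N) * star M = 1 := by
      have hsM : star M = 1 + star Δ' := by rw [hMdef, star_add, star_one]
      rw [hsM, mul_add, mul_one, mul_assoc Δ' N (star Δ'), ← hcomm, ← mul_assoc Δ' (star Δ') N,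
        hΔ'star, one_mul]
      rw [← hMN, hMdef, add_mul, one_mul, add_comm]
    have h3 : star M * (Δ' * N) = 1 := mul_eq_one_comm.mp h2
    calc star N = star N * (star M * (Δ' * N)) := by rw [h3, mul_one]
      _ = (star N * star M) * (Δ' * N) := by rw [mul_assoc]
      _ = Δ' * N := by rw [h1, one_mul]
  set T := Complex.I • ((2:ℂ) • N - 1) with hTdef
  have hTT : Tᵀ = T := by
    rw [hTdef, Matrix.transpose_smul, Matrix.transpose_sub, Matrix.transpose_smul, hNT,
      Matrix.transpose_one]
  have hTstar : star T = T := by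
    rw [hTdef, star_smul, star_sub, star_smul, star_one, hstarN, hΔ'N]
    simp only [star_trivial, Complex.star_def, Complex.conj_I, map_ofNat]
    module
  have hiT : Complex.I • T = 1 - (2:ℂ) • N := by
    rw [hTdef, smul_smul, Complex.I_mul_I]
    module
  -- realness of T
  set Tr := Matrix.of (fun i j => (T i j).re) with hTrdef
  have hTrmap : Tr.map Complex.ofRealHom = T := by
    ext i j
    have h1 : T j i = T i j := congrFun (congrFun hTT i) j
    have h2 : (starRingEnd ℂ) (T j i) = T i j := congrFun (congrFun hTstar i) j
    have hconj : (starRingEnd ℂ) (T i j) = T i j := by rw [← h1, h2, h1]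
    simpa [hTrdef, Matrix.map_apply] using Complex.conj_eq_iff_re.mp hconj
  have hTrH : Tr.IsHermitian := by
    rw [Matrix.IsHermitian]
    ext i j
    have h1 : T j i = T i j := congrFun (congrFun hTT i) j
    simp [Matrix.conjTranspose_apply, hTrdef, h1]
  set Q := (hTrH.eigenvectorUnitary : Matrix n n ℝ) with hQdef
  set ev := hTrH.eigenvalues with hevdef
  have hspec : Tr = Q * diagonal (RCLike.ofReal ∘ ev) * star Q := hTrH.spectral_theorem
  have hQ1 : Q * star Q = 1 := Matrix.mem_unitaryGroup_iff.mp (hTrH.eigenvectorUnitary).2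
  have hQ2 : star Q * Q = 1 := Matrix.mem_unitaryGroup_iff'.mp (hTrH.eigenvectorUnitary).2
  have hstarQ : star Q = Qᵀ := by ext i j; simp [Matrix.conjTranspose_apply]
  set Qc := Q.map Complex.ofRealHom with hQcdef
  have hmap1 : (1 : Matrix n n ℝ).map Complex.ofRealHom = 1 := by
    ext i j; simp [Matrix.one_apply, apply_ite]
  have hQc1 : Qc * Qcᵀ = 1 := by
    rw [hQcdef, ← Matrix.transpose_map, ← Matrix.map_mul, ← hstarQ, hQ1, hmap1]
  have hQc2 : Qcᵀ * Qc = 1 := by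
    rw [hQcdef, ← Matrix.transpose_map, ← Matrix.map_mul, ← hstarQ, hQ2, hmap1]
  set Dm := diagonal (fun k => (ev k : ℂ)) with hDmdef
  have hTspec : T = Qc * Dm * Qcᵀ := by
    rw [← hTrmap, hspec, Matrix.map_mul, Matrix.map_mul, hstarQ, Matrix.transpose_map]
    congr 2
    rw [Matrix.diagonal_map (by simp)]
    congr 1
  set e : n → ℂ := fun k => (1 - Complex.I * (ev k)) * (2:ℂ)⁻¹ with hedef
  have he0 : ∀ k, e k ≠ 0 := by
    intro k
    apply mul_ne_zero _ (by norm_num)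
    intro hk
    have := congrArg Complex.re hk
    simp [Complex.sub_re, Complex.mul_re] at this
  have hNspec : N = Qc * diagonal e * Qcᵀ := by
    have h2 : N = (2:ℂ)⁻¹ • ((1:Matrix n n ℂ) - Complex.I • T) := by
      rw [hiT]; module
    rw [h2, hTspec]
    calc (2:ℂ)⁻¹ • ((1: Matrix n n ℂ) - Complex.I • (Qc * Dm * Qcᵀ))
        = (2:ℂ)⁻¹ • (Qc * 1 * Qcᵀ - Complex.I • (Qc * Dm * Qcᵀ)) := by rw [mul_one, hQc1]
      _ = Qc * ((2:ℂ)⁻¹ • (1 - Complex.I • Dm)) * Qcᵀ := by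
          simp only [Matrix.smul_mul, Matrix.mul_smul, Matrix.mul_sub, Matrix.sub_mul,
            Matrix.mul_one, Matrix.one_mul]
      _ = Qc * diagonal e * Qcᵀ := by
          congr 1
          congr 1
          ext i j
          rcases eq_or_ne i j with rfl | hij
          · simp [hedef, hDmdef, Matrix.smul_apply, Matrix.sub_apply, Matrix.one_apply_eq,
              Matrix.diagonal_apply_eq]
            ring
          · simp [hedef, hDmdef, Matrix.smul_apply, Matrix.sub_apply, Matrix.one_apply_ne hij,
              Matrix.diagonal_apply_ne _ hij]
  have hMspec : M = Qc * diagonal (fun k => (e k)⁻¹) * Qcᵀ := by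
    have hr : N * (Qc * diagonal (fun k => (e k)⁻¹) * Qcᵀ) = 1 := by
      rw [hNspec]
      calc Qc * diagonal e * Qcᵀ * (Qc * diagonal (fun k => (e k)⁻¹) * Qcᵀ)
          = Qc * diagonal e * (Qcᵀ * Qc) * diagonal (fun k => (e k)⁻¹) * Qcᵀ := by
            simp only [Matrix.mul_assoc]
        _ = Qc * (diagonal e * diagonal (fun k => (e k)⁻¹)) * Qcᵀ := by
            rw [hQc2, Matrix.mul_one]
            simp only [Matrix.mul_assoc]
        _ = 1 := by
            rw [Matrix.diagonal_mul_diagonal]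
            have : (fun k => e k * (e k)⁻¹) = fun _ => (1:ℂ) := by
              funext k; exact mul_inv_cancel₀ (he0 k)
            rw [this, Matrix.diagonal_one, Matrix.mul_one, hQc1]
    calc M = M * (N * (Qc * diagonal (fun k => (e k)⁻¹) * Qcᵀ)) := by rw [hr, Matrix.mul_one]
      _ = (M * N) * (Qc * diagonal (fun k => (e k)⁻¹) * Qcᵀ) := by
          simp only [Matrix.mul_assoc]
      _ = Qc * diagonal (fun k => (e k)⁻¹) * Qcᵀ := by rw [hMN, Matrix.one_mul]
  have hΔ'spec : Δ' = Qc * diagonal (fun k => (e k)⁻¹ - 1) * Qcᵀ := by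
    have hd : Δ' = M - 1 := by rw [hMdef]; abel
    rw [hd, hMspec]
    calc Qc * diagonal (fun k => (e k)⁻¹) * Qcᵀ - 1
        = Qc * diagonal (fun k => (e k)⁻¹) * Qcᵀ - Qc * 1 * Qcᵀ := by rw [Matrix.mul_one, hQc1]
      _ = Qc * (diagonal (fun k => (e k)⁻¹) - 1) * Qcᵀ := by
          simp only [Matrix.sub_mul, Matrix.mul_sub, Matrix.mul_one, Matrix.one_mul]
      _ = Qc * diagonal (fun k => (e k)⁻¹ - 1) * Qcᵀ := by
          rw [← Matrix.diagonal_one, Matrix.diagonal_sub]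
  set h : n → ℂ := fun k => (1 + Complex.I * (ev k)) / ((Real.sqrt (1 + ev k ^ 2) : ℝ) : ℂ)
    with hhdef
  have hden : ∀ k, ((Real.sqrt (1 + ev k ^ 2) : ℝ) : ℂ) ≠ 0 := by
    intro k
    rw [Complex.ofReal_ne_zero]
    positivity
  have hden2 : ∀ k, ((Real.sqrt (1 + ev k ^ 2) : ℝ) : ℂ) * ((Real.sqrt (1 + ev k ^ 2) : ℝ) : ℂ)
      = 1 + (ev k : ℂ) ^ 2 := by
    intro k
    rw [← Complex.ofReal_mul, Real.mul_self_sqrt (by positivity)]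
    push_cast
    ring
  have hne1 : ∀ k, (1 : ℂ) - Complex.I * (ev k) ≠ 0 := by
    intro k
    intro hk
    have := congrArg Complex.re hk
    simp [Complex.sub_re, Complex.mul_re] at this
  have hne2 : ∀ k, (1 : ℂ) + (ev k : ℂ) ^ 2 ≠ 0 := by
    intro k
    have h1 : ((1 + ev k ^ 2 : ℝ) : ℂ) ≠ 0 := by
      rw [Complex.ofReal_ne_zero]; positivity
    simpa [Complex.ofReal_add, Complex.ofReal_pow] using h1
  have heinv : ∀ k, (e k)⁻¹ = 2 * ((1:ℂ) - Complex.I * (ev k))⁻¹ := by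
    intro k
    simp only [hedef]
    rw [_root_.mul_inv, inv_inv]
    ring
  have hg : ∀ k, (e k)⁻¹ - 1 = (1 + Complex.I * (ev k)) * ((1:ℂ) - Complex.I * (ev k))⁻¹ := by
    intro k
    rw [heinv k]
    have h1 := hne1 k
    field_simp
    ring
  have hsq : ∀ k, h k * h k = (e k)⁻¹ - 1 := by
    intro k
    simp only [hhdef]
    rw [hg k, div_mul_div_comm, hden2 k, div_eq_iff (hne2 k)]
    have h1 := hne1 k
    field_simp
    linear_combination (-(1 + Complex.I * (ev k:ℂ)) * (ev k:ℂ)^2) * Complex.I_sq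
  have hu : ∀ k, (starRingEnd ℂ) (h k) * h k = 1 := by
    intro k
    simp only [hhdef]
    simp only [map_div₀, map_add, _root_.map_one, _root_.map_mul, Complex.conj_I,
      Complex.conj_ofReal]
    rw [div_mul_div_comm, hden2 k]
    rw [div_eq_one_iff_eq (hne2 k)]
    linear_combination (- (ev k:ℂ)^2) * Complex.I_sq
  set V0 := diagonal h * Qcᵀ with hV0def
  have hV0t : V0ᵀ = Qc * diagonal h := by
    rw [hV0def, Matrix.transpose_mul, Matrix.transpose_transpose, Matrix.diagonal_transpose]
  have hV0sq : V0ᵀ * V0 = Δ' := by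
    rw [hV0t, hV0def]
    calc Qc * diagonal h * (diagonal h * Qcᵀ)
        = Qc * (diagonal h * diagonal h) * Qcᵀ := by simp only [Matrix.mul_assoc]
      _ = Qc * diagonal (fun k => h k * h k) * Qcᵀ := by rw [Matrix.diagonal_mul_diagonal]
      _ = Δ' := by
          rw [show (fun k => h k * h k) = fun k => (e k)⁻¹ - 1 from funext hsq, ← hΔ'spec]
  have hstarQcT : star (Qcᵀ) = Qc := by
    ext i j
    simp [Matrix.conjTranspose_apply, hQcdef, Matrix.map_apply, Complex.conj_ofReal]
  have hV0u : star V0 * V0 = 1 := by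
    rw [hV0def, Matrix.star_mul, hstarQcT, Matrix.star_eq_conjTranspose,
      Matrix.diagonal_conjTranspose]
    calc Qc * diagonal (star h) * (diagonal h * Qcᵀ)
        = Qc * (diagonal (star h) * diagonal h) * Qcᵀ := by simp only [Matrix.mul_assoc]
      _ = 1 := by
          rw [Matrix.diagonal_mul_diagonal]
          have hd : (fun k => (star h) k * h k) = fun _ => (1:ℂ) := by
            funext k
            simp only [Pi.star_apply, Complex.star_def]
            exact hu k
          rw [hd, Matrix.diagonal_one, Matrix.mul_one, hQc1]
  obtain ⟨w, hw⟩ := IsAlgClosed.exists_pow_nat_eq ((starRingEnd ℂ) z) (n := 2) (by norm_num)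
  have hwu : (starRingEnd ℂ) w * w = 1 := by
    have habs : ‖w‖ ^ 2 = 1 := by
      rw [← norm_pow, hw, Complex.norm_conj, hz]
    rw [mul_comm, Complex.mul_conj]
    rw [Complex.normSq_eq_norm_sq, habs]
    norm_num
  refine ⟨w • V0, ?_, ?_⟩
  · rw [Matrix.mem_unitaryGroup_iff']
    rw [star_smul, smul_mul_smul_comm, hV0u, Complex.star_def, hwu, one_smul]
  · rw [Matrix.transpose_smul, smul_mul_smul_comm, hV0sq, ← pow_two, hw, hΔ'def, smul_smul,
      hzz, one_smul]

end Helpers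

/-- For a unitary `U ∈ U(2d,ℂ)`, the following are equivalent:
(i) `U = W · diag(Δ, conj Δ)` with `W` orthogonal and `Δ` unitary;
(ii) `U = W · diag(Δ₁, Δ₂)` with `W` orthogonal, `Δ₁, Δ₂` unitary and `Δ₁Δ₂ᵀ` real;
(iii) `UᵀU = diag(Δ, conj Δ)` for some unitary `Δ`. -/
theorem conj_block_diagonal_characterization (d : ℕ)
    (U : Matrix (Fin d ⊕ Fin d) (Fin d ⊕ Fin d) ℂ)
    (hU : U ∈ Matrix.unitaryGroup (Fin d ⊕ Fin d) ℂ) :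
    ((∃ (W : Matrix (Fin d ⊕ Fin d) (Fin d ⊕ Fin d) ℝ) (Δ : Matrix (Fin d) (Fin d) ℂ),
        W ∈ Matrix.orthogonalGroup (Fin d ⊕ Fin d) ℝ ∧ Δ ∈ Matrix.unitaryGroup (Fin d) ℂ ∧
        U = W.map (fun x : ℝ => (x : ℂ)) * fromBlocks Δ 0 0 (Δ.map (starRingEnd ℂ))) ↔
      (∃ Δ : Matrix (Fin d) (Fin d) ℂ, Δ ∈ Matrix.unitaryGroup (Fin d) ℂ ∧
        Uᵀ * U = fromBlocks Δ 0 0 (Δ.map (starRingEnd ℂ)))) ∧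
    ((∃ (W : Matrix (Fin d ⊕ Fin d) (Fin d ⊕ Fin d) ℝ) (Δ₁ Δ₂ : Matrix (Fin d) (Fin d) ℂ),
        W ∈ Matrix.orthogonalGroup (Fin d ⊕ Fin d) ℝ ∧
        Δ₁ ∈ Matrix.unitaryGroup (Fin d) ℂ ∧ Δ₂ ∈ Matrix.unitaryGroup (Fin d) ℂ ∧
        (∀ i j, ((Δ₁ * Δ₂ᵀ) i j).im = 0) ∧
        U = W.map (fun x : ℝ => (x : ℂ)) * fromBlocks Δ₁ 0 0 Δ₂) ↔
      (∃ Δ : Matrix (Fin d) (Fin d) ℂ, Δ ∈ Matrix.unitaryGroup (Fin d) ℂ ∧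
        Uᵀ * U = fromBlocks Δ 0 0 (Δ.map (starRingEnd ℂ)))) := by
  have hUl : star U * U = 1 := Matrix.mem_unitaryGroup_iff'.mp hU
  have hUr : U * star U = 1 := Matrix.mem_unitaryGroup_iff.mp hU
  have hmap1 : ∀ m [Fintype m] [DecidableEq m],
      (1 : Matrix m m ℝ).map (fun x : ℝ => (x : ℂ)) = 1 := by
    intro m _ _; ext i j; simp [Matrix.one_apply, apply_ite]
  have key : ∀ (W : Matrix (Fin d ⊕ Fin d) (Fin d ⊕ Fin d) ℝ)
      (B : Matrix (Fin d ⊕ Fin d) (Fin d ⊕ Fin d) ℂ),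
      W ∈ Matrix.orthogonalGroup (Fin d ⊕ Fin d) ℝ →
      (W.map (fun x : ℝ => (x : ℂ)) * B)ᵀ * (W.map (fun x : ℝ => (x : ℂ)) * B) = Bᵀ * B := by
    intro W B hW
    set Wc := W.map (fun x : ℝ => (x : ℂ)) with hWcdef
    have hWo : Wᵀ * W = 1 := by
      have h0 := (Matrix.mem_orthogonalGroup_iff' _ ℝ).mp hW
      exact h0
    have hmap : Wcᵀ * Wc = 1 := by
      rw [hWcdef, show (fun x : ℝ => (x : ℂ)) = ⇑Complex.ofRealHom from rfl,
        ← Matrix.transpose_map, ← Matrix.map_mul, hWo]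
      exact hmap1 _
    calc (Wc * B)ᵀ * (Wc * B) = Bᵀ * (Wcᵀ * Wc) * B := by
          rw [Matrix.transpose_mul]; simp only [Matrix.mul_assoc]
      _ = Bᵀ * B := by rw [hmap, Matrix.mul_one]
  have h13 : (∃ (W : Matrix (Fin d ⊕ Fin d) (Fin d ⊕ Fin d) ℝ) (Δ : Matrix (Fin d) (Fin d) ℂ),
        W ∈ Matrix.orthogonalGroup (Fin d ⊕ Fin d) ℝ ∧ Δ ∈ Matrix.unitaryGroup (Fin d) ℂ ∧
        U = W.map (fun x : ℝ => (x : ℂ)) * fromBlocks Δ 0 0 (Δ.map (starRingEnd ℂ))) →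
      (∃ Δ : Matrix (Fin d) (Fin d) ℂ, Δ ∈ Matrix.unitaryGroup (Fin d) ℂ ∧
        Uᵀ * U = fromBlocks Δ 0 0 (Δ.map (starRingEnd ℂ))) := by
    rintro ⟨W, Δ, hW, hΔ, hUeq⟩
    refine ⟨Δᵀ * Δ, mul_mem (transpose_mem_unitary hΔ) hΔ, ?_⟩
    rw [hUeq, key W _ hW, Matrix.fromBlocks_transpose, Matrix.fromBlocks_multiply]
    simp only [Matrix.transpose_zero, Matrix.mul_zero, Matrix.zero_mul, add_zero, zero_add,
      Matrix.zero_mul]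
    rw [← Matrix.transpose_map, ← Matrix.map_mul]
  have h23 : (∃ (W : Matrix (Fin d ⊕ Fin d) (Fin d ⊕ Fin d) ℝ)
        (Δ₁ Δ₂ : Matrix (Fin d) (Fin d) ℂ),
        W ∈ Matrix.orthogonalGroup (Fin d ⊕ Fin d) ℝ ∧
        Δ₁ ∈ Matrix.unitaryGroup (Fin d) ℂ ∧ Δ₂ ∈ Matrix.unitaryGroup (Fin d) ℂ ∧
        (∀ i j, ((Δ₁ * Δ₂ᵀ) i j).im = 0) ∧
        U = W.map (fun x : ℝ => (x : ℂ)) * fromBlocks Δ₁ 0 0 Δ₂) →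
      (∃ Δ : Matrix (Fin d) (Fin d) ℂ, Δ ∈ Matrix.unitaryGroup (Fin d) ℂ ∧
        Uᵀ * U = fromBlocks Δ 0 0 (Δ.map (starRingEnd ℂ))) := by
    rintro ⟨W, Δ₁, Δ₂, hW, h1, h2, hIm, hUeq⟩
    refine ⟨Δ₁ᵀ * Δ₁, mul_mem (transpose_mem_unitary h1) h1, ?_⟩
    rw [hUeq, key W _ hW, Matrix.fromBlocks_transpose, Matrix.fromBlocks_multiply]
    simp only [Matrix.transpose_zero, Matrix.mul_zero, Matrix.zero_mul, add_zero, zero_add]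
    set R := Δ₁ * Δ₂ᵀ with hRdef
    have hstarR : star R = Rᵀ := by
      rw [Matrix.star_eq_conjTranspose]
      ext i j
      simp only [Matrix.conjTranspose_apply, Matrix.transpose_apply]
      exact Complex.conj_eq_iff_im.mpr (hIm j i)
    have hRu : R * star R = 1 :=
      Matrix.mem_unitaryGroup_iff.mp (mul_mem h1 (transpose_mem_unitary h2))
    have hRRt : R * Rᵀ = 1 := by rw [← hstarR]; exact hRu
    have hΔ₂t : Δ₂ᵀ = star Δ₁ * R := by
      rw [hRdef, ← Matrix.mul_assoc, Matrix.mem_unitaryGroup_iff'.mp h1, Matrix.one_mul]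
    have hΔ₂ : Δ₂ = Rᵀ * (star Δ₁)ᵀ := by
      have h0 := congrArg Matrix.transpose hΔ₂t
      rwa [Matrix.transpose_transpose, Matrix.transpose_mul] at h0
    have hblock : Δ₂ᵀ * Δ₂ = (Δ₁ᵀ * Δ₁).map (starRingEnd ℂ) :=
      calc Δ₂ᵀ * Δ₂ = star Δ₁ * R * (Rᵀ * (star Δ₁)ᵀ) := by rw [← hΔ₂t, ← hΔ₂]
        _ = star Δ₁ * (R * Rᵀ) * (star Δ₁)ᵀ := by simp only [Matrix.mul_assoc]
        _ = star Δ₁ * (star Δ₁)ᵀ := by rw [hRRt, Matrix.mul_one]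
        _ = (Δ₁ᵀ * Δ₁).map (starRingEnd ℂ) := by
            have hst : (star Δ₁)ᵀ = Δ₁.map (starRingEnd ℂ) := by
              ext i j; simp [Matrix.conjTranspose_apply]
            rw [Matrix.map_mul, hst, ← transpose_map_conj_eq_star Δ₁]
    rw [hblock]
  have h31 : (∃ Δ : Matrix (Fin d) (Fin d) ℂ, Δ ∈ Matrix.unitaryGroup (Fin d) ℂ ∧
        Uᵀ * U = fromBlocks Δ 0 0 (Δ.map (starRingEnd ℂ))) →
      (∃ (W : Matrix (Fin d ⊕ Fin d) (Fin d ⊕ Fin d) ℝ) (Δ : Matrix (Fin d) (Fin d) ℂ),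
        W ∈ Matrix.orthogonalGroup (Fin d ⊕ Fin d) ℝ ∧ Δ ∈ Matrix.unitaryGroup (Fin d) ℂ ∧
        U = W.map (fun x : ℝ => (x : ℂ)) * fromBlocks Δ 0 0 (Δ.map (starRingEnd ℂ))) := by
    rintro ⟨Δ, hΔu, hEq⟩
    have hsym : Δᵀ = Δ := by
      have h1 : (Uᵀ * U)ᵀ = Uᵀ * U := by
        rw [Matrix.transpose_mul, Matrix.transpose_transpose]
      rw [hEq, Matrix.fromBlocks_transpose] at h1
      simp only [Matrix.transpose_zero] at h1
      exact (Matrix.fromBlocks_inj.mp h1).1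
    obtain ⟨V, hVu, hVsq⟩ := takagi Δ hΔu hsym
    set Vc := V.map (starRingEnd ℂ) with hVcdef
    have hVcu := conj_mem_unitary hVu
    set B := Matrix.fromBlocks V 0 0 Vc with hBdef
    have hstarB : star B = Matrix.fromBlocks (star V) 0 0 (star Vc) := by
      rw [hBdef, Matrix.star_eq_conjTranspose, Matrix.fromBlocks_conjTranspose]
      simp only [Matrix.conjTranspose_zero, Matrix.star_eq_conjTranspose]
    have hBu1 : star B * B = 1 := by
      rw [hstarB, hBdef, Matrix.fromBlocks_multiply]
      simp only [Matrix.mul_zero, Matrix.zero_mul, add_zero, zero_add,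
        Matrix.mem_unitaryGroup_iff'.mp hVu, Matrix.mem_unitaryGroup_iff'.mp hVcu]
      rw [show star Vc * Vc = 1 from Matrix.mem_unitaryGroup_iff'.mp hVcu]
      exact Matrix.fromBlocks_one
    have hBu2 : B * star B = 1 := by
      rw [hstarB, hBdef, Matrix.fromBlocks_multiply]
      simp only [Matrix.mul_zero, Matrix.zero_mul, add_zero, zero_add,
        Matrix.mem_unitaryGroup_iff.mp hVu, Matrix.mem_unitaryGroup_iff.mp hVcu]
      rw [show Vc * star Vc = 1 from Matrix.mem_unitaryGroup_iff.mp hVcu]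
      exact Matrix.fromBlocks_one
    have hBtB : Bᵀ * B = Uᵀ * U := by
      rw [hBdef, Matrix.fromBlocks_transpose, Matrix.fromBlocks_multiply, hEq]
      simp only [Matrix.transpose_zero, Matrix.mul_zero, Matrix.zero_mul, add_zero, zero_add]
      rw [hVcdef, ← Matrix.transpose_map, ← Matrix.map_mul, hVsq]
    set Wc := U * star B with hWcdef
    have hWcB : U = Wc * B := by rw [hWcdef, Matrix.mul_assoc, hBu1, Matrix.mul_one]
    have hconjU : U.map (starRingEnd ℂ) = U * star (Uᵀ * U) := by
      calc U.map (starRingEnd ℂ) = star Uᵀ := conj_map_eq_star_transpose U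
        _ = (U * star U) * star Uᵀ := by rw [hUr, Matrix.one_mul]
        _ = U * star (Uᵀ * U) := by rw [Matrix.star_mul, Matrix.mul_assoc]
    have hconjWc : Wc.map (starRingEnd ℂ) = Wc := by
      have hm : Wc.map (starRingEnd ℂ)
          = U.map (starRingEnd ℂ) * (star B).map (starRingEnd ℂ) := by
        rw [hWcdef, Matrix.map_mul]
      have h2 : (star B).map (starRingEnd ℂ) = Bᵀ := by
        ext i j; simp [Matrix.conjTranspose_apply]
      have h3 : star Bᵀ * Bᵀ = 1 := by
        have h4 := congrArg Matrix.transpose hBu2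
        rw [Matrix.transpose_mul, Matrix.transpose_one] at h4
        rwa [show (star B)ᵀ = star Bᵀ by ext i j; simp [Matrix.conjTranspose_apply]] at h4
      rw [hm, h2, hconjU, ← hBtB, Matrix.star_mul, hWcdef]
      simp only [Matrix.mul_assoc, h3, Matrix.mul_one]
    set Wr := Matrix.of (fun i j => (Wc i j).re) with hWrdef
    have hWrmap : Wr.map (fun x : ℝ => (x:ℂ)) = Wc := by
      ext i j
      have hconj : (starRingEnd ℂ) (Wc i j) = Wc i j := by
        have h0 := congrFun (congrFun hconjWc i) j
        simpa [Matrix.map_apply] using h0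
      simpa [hWrdef, Matrix.map_apply] using Complex.conj_eq_iff_re.mp hconj
    have hWcu : star Wc * Wc = 1 := by
      rw [hWcdef, Matrix.star_mul, star_star]
      calc B * star U * (U * star B) = B * (star U * U) * star B := by
            simp only [Matrix.mul_assoc]
        _ = 1 := by rw [hUl, Matrix.mul_one, hBu2]
    have hWtW : Wcᵀ * Wc = 1 := by
      have hWt : Wcᵀ = star Wc := by
        ext i j
        simp only [Matrix.conjTranspose_apply, Matrix.transpose_apply]
        have h0 := congrFun (congrFun hconjWc j) i
        simpa [Matrix.map_apply] using h0.symm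
      rw [hWt, hWcu]
    have hWrorth : Wr ∈ Matrix.orthogonalGroup (Fin d ⊕ Fin d) ℝ := by
      rw [Matrix.mem_orthogonalGroup_iff' _ ℝ]
      have hstarWr : star Wr = Wrᵀ := by ext i j; simp [Matrix.conjTranspose_apply]
      have hm : (Wrᵀ * Wr).map (fun x:ℝ => (x:ℂ)) = 1 := by
        rw [show (fun x:ℝ => (x:ℂ)) = ⇑Complex.ofRealHom from rfl, Matrix.map_mul,
          Matrix.transpose_map]
        rw [show Wr.map ⇑Complex.ofRealHom = Wc from hWrmap]
        exact hWtW
      ext i j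
      have h0 := congrFun (congrFun hm i) j
      simp only [Matrix.map_apply, Matrix.one_apply] at h0 ⊢
      rcases eq_or_ne i j with rfl | hij
      · simp only [if_pos rfl] at h0 ⊢
        exact_mod_cast h0
      · simp only [if_neg hij] at h0 ⊢
        exact_mod_cast h0
    exact ⟨Wr, V, hWrorth, hVu, by rw [hWrmap, ← hVcdef, ← hBdef, ← hWcB]⟩
  refine ⟨⟨h13, h31⟩, ⟨h23, ?_⟩⟩
  intro h
  obtain ⟨W, Δ, hW, hΔ, hUeq⟩ := h31 h
  refine ⟨W, Δ, Δ.map (starRingEnd ℂ), hW, hΔ, conj_mem_unitary hΔ, ?_, hUeq⟩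
  have h0 : Δ * (Δ.map (starRingEnd ℂ))ᵀ = 1 := by
    rw [← Matrix.transpose_map, transpose_map_conj_eq_star]
    exact Matrix.mem_unitaryGroup_iff.mp hΔ
  intro i j
  rw [h0]
  rcases eq_or_ne i j with rfl | hij
  · simp [Matrix.one_apply]
  · simp [Matrix.one_apply, hij]
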